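/- The one-sided limit lim_{r→0⁺} (1/r) · ∫_{(0,1)²} 1_{{|y(x) − 1| < r}} ( |∂₁y(x)| + |∂₂y(x)| ) dx exists and equals 0. -/

import Mathlib

open Real MeasureTheory Filter Set

/-- `y(x₁,x₂) = sin(π x₁) sin(π x₂)`. -/
noncomputable def ybar (x : ℝ × ℝ) : ℝ := Real.sin (π * x.1) * Real.sin (π * x.2)

/-- `∂₁ y (x₁,x₂) = π cos(π x₁) sin(π x₂)`. -/
noncomputable def d1y (x : ℝ × ℝ) : ℝ := π * Real.cos (π * x.1) * Real.sin (π * x.2)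

/-- `∂₂ y (x₁,x₂) = π sin(π x₁) cos(π x₂)`. -/
noncomputable def d2y (x : ℝ × ℝ) : ℝ := π * Real.sin (π * x.1) * Real.cos (π * x.2)

lemma coord_bound {r t : ℝ} (hr0 : 0 < r) (hr1 : r < 1) (ht : t ∈ Set.Ioo (0:ℝ) 1)
    (hs : 1 - r < Real.sin (π * t)) :
    |Real.cos (π * t)| ≤ Real.sqrt (2 * r) ∧ t ∈ Set.Ioo (1/2 - Real.sqrt (r/2)) (1/2 + Real.sqrt (r/2)) := by
  have hsin1 : Real.sin (π * t) ≤ 1 := Real.sin_le_one _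
  constructor
  · have hsq : Real.cos (π * t) ^ 2 ≤ 2 * r := by
      have := Real.sin_sq_add_cos_sq (π * t)
      nlinarith [sq_nonneg (Real.sin (π * t) - (1 - r))]
    calc |Real.cos (π * t)| = Real.sqrt (Real.cos (π * t) ^ 2) := (Real.sqrt_sq_eq_abs _).symm
      _ ≤ Real.sqrt (2 * r) := Real.sqrt_le_sqrt hsq
  · have habs : |π * t - π / 2| ≤ π := by
      rw [abs_le]
      constructor <;> nlinarith [pi_pos, ht.1, ht.2]
    have hcos := Real.cos_le_one_sub_mul_cos_sq habs
    have hsin_eq : Real.cos (π * t - π / 2) = Real.sin (π * t) := Real.cos_sub_pi_div_two _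
    rw [hsin_eq] at hcos
    have hq : (t - 1/2) ^ 2 < r / 2 := by
      have hπ : (0:ℝ) ≠ π := pi_ne_zero.symm
      have key : 2 / π ^ 2 * (π * t - π / 2) ^ 2 = 2 * (t - 1/2) ^ 2 := by
        field_simp
      linarith
    have : |t - 1/2| < Real.sqrt (r/2) := by
      calc |t - 1/2| = Real.sqrt ((t - 1/2)^2) := (Real.sqrt_sq_eq_abs _).symm
        _ < Real.sqrt (r/2) := Real.sqrt_lt_sqrt (sq_nonneg _) hq
    rw [abs_lt] at this
    constructor <;> [linarith [this.1]; linarith [this.2]]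

/-- The one-sided limit
`lim_{r→0⁺} (1/r) ∫_{(0,1)²} 1_{|y−1|<r} (|∂₁y| + |∂₂y|) dx` exists and equals `0`. -/
theorem stmt5 :
    Filter.Tendsto
      (fun r : ℝ => (1 / r) *
        ∫ x in Set.Ioo (0:ℝ) 1 ×ˢ Set.Ioo (0:ℝ) 1,
          (if |ybar x - 1| < r then |d1y x| + |d2y x| else 0))
      (nhdsWithin (0:ℝ) (Set.Ioi 0)) (nhds 0) := by
  set sq : Set (ℝ × ℝ) := Set.Ioo (0:ℝ) 1 ×ˢ Set.Ioo (0:ℝ) 1 with hsq_def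
  set F : ℝ → ℝ := fun r => (1 / r) *
      ∫ x in sq, (if |ybar x - 1| < r then |d1y x| + |d2y x| else 0) with hF_def
  have hub : Filter.Tendsto (fun r : ℝ => 4 * π * Real.sqrt (2 * r))
      (nhdsWithin (0:ℝ) (Set.Ioi 0)) (nhds 0) := by
    have hc : Continuous (fun r : ℝ => 4 * π * Real.sqrt (2 * r)) := by
      continuity
    have := (hc.tendsto 0).mono_left
      (nhdsWithin_le_nhds : nhdsWithin (0:ℝ) (Set.Ioi 0) ≤ nhds 0)
    simpa using this
  apply squeeze_zero'
  · -- eventually 0 ≤ F r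
    filter_upwards [self_mem_nhdsWithin] with r hr
    have hr0 : 0 < r := hr
    apply mul_nonneg (by positivity)
    apply setIntegral_nonneg (measurableSet_Ioo.prod measurableSet_Ioo)
    intro x _
    split
    · positivity
    · exact le_refl 0
  · -- eventually F r ≤ 4π√(2r)
    filter_upwards [Ioo_mem_nhdsGT_of_mem (by norm_num : (0:ℝ) ∈ Set.Ico (0:ℝ) 1)]
      with r hr
    obtain ⟨hr0, hr1⟩ := hr
    have hmsq : MeasurableSet sq := measurableSet_Ioo.prod measurableSet_Ioo
    set s := Real.sqrt (r/2) with hs_def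
    have hs0 : 0 ≤ s := Real.sqrt_nonneg _
    set J : Set ℝ := Set.Ioo (1/2 - s) (1/2 + s) with hJ_def
    have hmJ : MeasurableSet (J ×ˢ J) := measurableSet_Ioo.prod measurableSet_Ioo
    set c := 2 * π * Real.sqrt (2*r) with hc_def
    have hc0 : 0 ≤ c := by positivity
    have hsqvol : volume sq ≠ ⊤ := by
      rw [hsq_def, Measure.volume_eq_prod, Measure.prod_prod, Real.volume_Ioo]
      simp
    have hg_int : Integrable ((J ×ˢ J).indicator (fun _ => c)) (volume.restrict sq) := by
      apply Integrable.indicator _ hmJ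
      exact integrableOn_const hsqvol
    have hmono : (∫ x in sq, (if |ybar x - 1| < r then |d1y x| + |d2y x| else 0)) ≤
        ∫ x in sq, (J ×ˢ J).indicator (fun _ => c) x := by
      apply integral_mono_of_nonneg
      · apply ae_of_all
        intro x
        show (0:ℝ) ≤ (if |ybar x - 1| < r then |d1y x| + |d2y x| else 0)
        split
        · positivity
        · exact le_refl 0
      · exact hg_int
      · apply (ae_restrict_iff' hmsq).2 (ae_of_all _ ?_)
        intro x hx
        show (if |ybar x - 1| < r then |d1y x| + |d2y x| else 0) ≤
          (J ×ˢ J).indicator (fun _ => c) x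
        by_cases hcond : |ybar x - 1| < r
        · rw [if_pos hcond]
          have hylt := (abs_lt.1 hcond).1
          have hsin1pos : 0 < Real.sin (π * x.1) :=
            Real.sin_pos_of_pos_of_lt_pi (by nlinarith [pi_pos, hx.1.1])
              (by nlinarith [pi_pos, hx.1.2])
          have hsin2pos : 0 < Real.sin (π * x.2) :=
            Real.sin_pos_of_pos_of_lt_pi (by nlinarith [pi_pos, hx.2.1])
              (by nlinarith [pi_pos, hx.2.2])
          have hsin1le : Real.sin (π * x.1) ≤ 1 := Real.sin_le_one _
          have hsin2le : Real.sin (π * x.2) ≤ 1 := Real.sin_le_one _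
          have hy1 : 1 - r < Real.sin (π * x.1) := by
            have : Real.sin (π * x.1) * Real.sin (π * x.2) ≤ Real.sin (π * x.1) := by nlinarith
            simp only [ybar] at hylt; linarith
          have hy2 : 1 - r < Real.sin (π * x.2) := by
            have : Real.sin (π * x.1) * Real.sin (π * x.2) ≤ Real.sin (π * x.2) := by nlinarith
            simp only [ybar] at hylt; linarith
          have h1 := coord_bound hr0 hr1 hx.1 hy1
          have h2 := coord_bound hr0 hr1 hx.2 hy2
          rw [Set.indicator_of_mem (Set.mk_mem_prod h1.2 h2.2)]
          have hb1 : |d1y x| ≤ π * Real.sqrt (2*r) := by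
            rw [d1y, abs_mul, abs_mul, abs_of_pos pi_pos]
            have h2' : |Real.sin (π * x.2)| ≤ 1 := Real.abs_sin_le_one _
            calc π * |Real.cos (π * x.1)| * |Real.sin (π * x.2)|
                ≤ π * Real.sqrt (2*r) * 1 :=
                  mul_le_mul (mul_le_mul_of_nonneg_left h1.1 pi_pos.le) h2'
                    (abs_nonneg _) (by positivity)
              _ = π * Real.sqrt (2*r) := mul_one _
          have hb2 : |d2y x| ≤ π * Real.sqrt (2*r) := by
            rw [d2y, abs_mul, abs_mul, abs_of_pos pi_pos]
            have h1' : |Real.sin (π * x.1)| ≤ 1 := Real.abs_sin_le_one _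
            calc π * |Real.sin (π * x.1)| * |Real.cos (π * x.2)|
                ≤ π * 1 * Real.sqrt (2*r) :=
                  mul_le_mul (mul_le_mul_of_nonneg_left h1' pi_pos.le) h2.1
                    (abs_nonneg _) (by positivity)
              _ = π * Real.sqrt (2*r) := by ring
          rw [hc_def]; linarith
        · rw [if_neg hcond]
          exact Set.indicator_nonneg (fun _ _ => hc0) x
    have hind : (∫ x in sq, (J ×ˢ J).indicator (fun _ => c) x) ≤ 2 * r * c := by
      rw [setIntegral_indicator hmJ, setIntegral_const, smul_eq_mul]
      have hmeas : (volume (sq ∩ J ×ˢ J)).toReal ≤ 2 * r := by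
        have hle : volume (sq ∩ J ×ˢ J) ≤ volume (J ×ˢ J) :=
          measure_mono Set.inter_subset_right
        have hvol : volume (J ×ˢ J) = ENNReal.ofReal (2*s) * ENNReal.ofReal (2*s) := by
          rw [Measure.volume_eq_prod, Measure.prod_prod, Real.volume_Ioo]
          ring_nf
        have hJtop : volume (J ×ˢ J) ≠ ⊤ := by
          rw [hvol]; exact ENNReal.mul_ne_top ENNReal.ofReal_ne_top ENNReal.ofReal_ne_top
        have := ENNReal.toReal_mono hJtop hle
        rw [hvol, ENNReal.toReal_mul, ENNReal.toReal_ofReal (by linarith)] at this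
        have hss : s * s = r / 2 := Real.mul_self_sqrt (by linarith)
        nlinarith
      exact mul_le_mul_of_nonneg_right hmeas hc0
    calc F r ≤ (1 / r) * (2 * r * c) := by
          apply mul_le_mul_of_nonneg_left (le_trans hmono hind) (by positivity)
      _ = 4 * π * Real.sqrt (2 * r) := by
          rw [hc_def]; field_simp; ring
  · exact hub
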